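/- Let S ≥ 1 and M be natural numbers and let a_0, …, a_M be nonnegative real numbers with Σ_{i=0}^{M} a_i = 1 and Σ_{i=0}^{M} i·a_i < S. Assume additionally the aperiodicity condition that the greatest common divisor of the natural numbers |S − i|, taken over all indices i ∈ {0, …, M} with a_i > 0, equals 1. Then the only root of the complex polynomial P(z) = z^S − Σ_{i=0}^{M} a_i z^i on the unit circle {z : |z| = 1} is z = 1, and P has exactly S − 1 roots, counted with multiplicity, in the open unit disc {z ∈ ℂ : |z| < 1}. -/

import Mathlib

open Polynomial

section AuxRootsLemma
open Complex Metric Real Set Filter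
open scoped Topology
noncomputable section

lemma circleIntegral_add' {f g : ℂ → ℂ} {c : ℂ} {R : ℝ} (hf : CircleIntegrable f c R)
    (hg : CircleIntegrable g c R) :
    (∮ z in C(c, R), (f z + g z)) = (∮ z in C(c, R), f z) + ∮ z in C(c, R), g z := by
  simp only [circleIntegral, smul_add, intervalIntegral.integral_add hf.out hg.out]

lemma integral_sub_inv_of_abs_gt {R : ℝ} (hR : 0 < R) {w : ℂ} (hw : R < ‖w‖) :
    (∮ z in C(0, R), (z - w)⁻¹) = 0 := by
  have hne : ∀ z ∈ closedBall (0 : ℂ) R, z - w ≠ 0 := by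
    intro z hz
    rw [mem_closedBall_zero_iff] at hz
    have : ‖z‖ < ‖w‖ := lt_of_le_of_lt hz hw
    exact sub_ne_zero.2 (by rintro rfl; exact absurd rfl this.ne)
  refine circleIntegral_eq_zero_of_differentiable_on_off_countable hR.le Set.countable_empty
    (ContinuousOn.inv₀ (continuousOn_id.sub continuousOn_const) hne) ?_
  intro z hz
  exact ((differentiableAt_id.sub_const w).inv (hne z (ball_subset_closedBall hz.1)))

def msum (t : Multiset ℂ) (z : ℂ) : ℂ := (t.map fun r => (z - r)⁻¹).sum

lemma continuousOn_msum (t : Multiset ℂ) (s : Set ℂ) (h : ∀ r ∈ t, ∀ z ∈ s, z ≠ r) :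
    ContinuousOn (msum t) s := by
  induction t using Multiset.induction_on with
  | empty => exact (continuousOn_const (c := (0:ℂ))).congr (fun z _ => by simp [msum])
  | cons a u ih =>
      have h1 : ContinuousOn (fun z => (z - a)⁻¹) s :=
        ContinuousOn.inv₀ (continuousOn_id.sub continuousOn_const)
          (fun z hz => sub_ne_zero.2 (h a (Multiset.mem_cons_self a u) z hz))
      have h2 := ih (fun r hr z hz => h r (Multiset.mem_cons_of_mem hr) z hz)
      have : msum (a ::ₘ u) = fun z => (z - a)⁻¹ + msum u z := by
        funext z; simp [msum, Multiset.map_cons, Multiset.sum_cons]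
      rw [this]; exact h1.add h2

lemma circleIntegrable_msum (t : Multiset ℂ) {R : ℝ} (hR : 0 < R)
    (ht : ∀ r ∈ t, ‖r‖ ≠ R) : CircleIntegrable (msum t) 0 R := by
  refine ContinuousOn.circleIntegrable hR.le (continuousOn_msum t _ ?_)
  intro r hr z hz
  rw [mem_sphere_zero_iff_norm] at hz
  intro h
  exact ht r hr (by rw [← h]; simpa using hz)

lemma integral_msum (t : Multiset ℂ) {R : ℝ} (hR : 0 < R)
    (ht : ∀ r ∈ t, ‖r‖ ≠ R) :
    (∮ z in C(0, R), msum t z)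
      = 2 * π * I * ((t.filter fun r => ‖r‖ < R).card : ℕ) := by
  induction t using Multiset.induction_on with
  | empty => simp [msum, circleIntegral]
  | cons a u ih =>
      have ha : ‖a‖ ≠ R := ht a (Multiset.mem_cons_self a u)
      have hu : ∀ r ∈ u, ‖r‖ ≠ R := fun r hr => ht r (Multiset.mem_cons_of_mem hr)
      have hint1 : CircleIntegrable (fun z => (z - a)⁻¹) (0 : ℂ) R := by
        rw [circleIntegrable_sub_inv_iff]
        right
        rw [mem_sphere_zero_iff_norm]
        simpa [abs_of_pos hR] using ha
      have heq : msum (a ::ₘ u) = fun z => (z - a)⁻¹ + msum u z := by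
        funext z; simp [msum, Multiset.map_cons, Multiset.sum_cons]
      have hval : (∮ z in C(0, R), (z - a)⁻¹)
          = if ‖a‖ < R then 2 * π * I else 0 := by
        rcases lt_or_gt_of_ne ha with h | h
        · rw [if_pos h]
          exact circleIntegral.integral_sub_inv_of_mem_ball (by simpa [mem_ball_zero_iff] using h)
        · rw [if_neg (not_lt.2 h.le)]
          exact integral_sub_inv_of_abs_gt hR h
      rw [heq, circleIntegral_add' hint1 (circleIntegrable_msum u hR hu), hval, ih hu]
      by_cases h : ‖a‖ < R
      · rw [if_pos h, Multiset.filter_cons_of_pos (p := fun r => ‖r‖ < R) _ h, Multiset.card_cons]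
        push_cast; ring
      · rw [if_neg h, Multiset.filter_cons_of_neg (p := fun r => ‖r‖ < R) _ h]
        ring

lemma eval_prod_ne_zero (c : ℂ) (hc : c ≠ 0) (t : Multiset ℂ) (z : ℂ) (hz : ∀ r ∈ t, z ≠ r) :
    eval z (C c * (t.map fun r => X - C r).prod) ≠ 0 := by
  rw [eval_mul, eval_C, eval_multiset_prod]
  refine mul_ne_zero hc ?_
  rw [Multiset.map_map]
  refine Multiset.prod_ne_zero ?_
  simp only [Multiset.mem_map, Function.comp_apply, eval_sub, eval_X, eval_C]
  rintro ⟨r, hr, h⟩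
  exact hz r hr (sub_eq_zero.mp h)

lemma logDeriv_eq (c : ℂ) (hc : c ≠ 0) (t : Multiset ℂ) (z : ℂ) (hz : ∀ r ∈ t, z ≠ r) :
    eval z (derivative (C c * (t.map fun r => X - C r).prod)) /
      eval z (C c * (t.map fun r => X - C r).prod) = msum t z := by
  induction t using Multiset.induction_on with
  | empty => simp [msum]
  | cons a u ih =>
      have hfac : (C c * ((a ::ₘ u).map fun r => X - C r).prod)
          = (X - C a) * (C c * (u.map fun r => X - C r).prod) := by
        rw [Multiset.map_cons, Multiset.prod_cons]; ring
      have hu : ∀ r ∈ u, z ≠ r := fun r hr => hz r (Multiset.mem_cons_of_mem hr)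
      have hza : z - a ≠ 0 := sub_ne_zero.2 (hz a (Multiset.mem_cons_self a u))
      have hq : eval z (C c * (u.map fun r => X - C r).prod) ≠ 0 :=
        eval_prod_ne_zero c hc u z hu
      have heq : msum (a ::ₘ u) z = (z - a)⁻¹ + msum u z := by
        simp [msum, Multiset.map_cons, Multiset.sum_cons]
      set q : Polynomial ℂ := C c * (u.map fun r => X - C r).prod with hqdef
      rw [hfac, derivative_mul, heq, ← ih hu]
      simp only [derivative_sub, derivative_X, derivative_C, sub_zero, one_mul,
        eval_add, eval_mul, eval_sub, eval_X, eval_C]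
      field_simp

lemma argPrinciple (c : ℂ) (hc : c ≠ 0) (t : Multiset ℂ) {R : ℝ} (hR : 0 < R)
    (ht : ∀ r ∈ t, ‖r‖ ≠ R) :
    (∮ z in C(0, R), eval z (derivative (C c * (t.map fun r => X - C r).prod)) /
        eval z (C c * (t.map fun r => X - C r).prod))
      = 2 * π * I * ((t.filter fun r => ‖r‖ < R).card : ℕ) := by
  rw [circleIntegral.integral_congr hR.le (g := msum t) ?_]
  · exact integral_msum t hR ht
  · intro z hz
    refine logDeriv_eq c hc t z ?_
    intro r hr h
    rw [mem_sphere_zero_iff_norm] at hz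
    exact ht r hr (by rw [← h]; simpa using hz)

lemma integral_logDeriv (S : ℕ) (A : Polynomial ℂ) {R : ℝ} (hR : 0 < R)
    (hA : ∀ z : ℂ, ‖z‖ = R → ‖eval z A‖ < R ^ S) :
    (∮ z in C(0, R), eval z (derivative (X ^ S - A)) / eval z (X ^ S - A))
      = 2 * π * I * S := by
  set P : Polynomial ℂ := X ^ S - A with hPdef
  set z : ℝ → ℂ := circleMap 0 R with hzdef
  have habs : ∀ θ, ‖z θ‖ = R := by
    intro θ; simp [hzdef, norm_circleMap_zero, abs_of_pos hR]
  have hz0 : ∀ θ, z θ ≠ 0 := by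
    intro θ h
    have := habs θ; rw [h] at this; simp at this; exact hR.ne' this.symm
  have hzS : ∀ θ, (z θ) ^ S ≠ 0 := fun θ => pow_ne_zero _ (hz0 θ)
  have habsS : ∀ θ, ‖(z θ) ^ S‖ = R ^ S := by
    intro θ; rw [norm_pow, habs]
  have hPz : ∀ θ, eval (z θ) P ≠ 0 := by
    intro θ
    have h1 : ‖eval (z θ) A‖ < R ^ S := hA _ (habs θ)
    have h2 : ‖(z θ) ^ S‖ - ‖eval (z θ) A‖
        ≤ ‖(z θ) ^ S - eval (z θ) A‖ := by
      simpa using norm_sub_norm_le ((z θ) ^ S) (eval (z θ) A)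
    have h3 : 0 < ‖(z θ) ^ S - eval (z θ) A‖ := by
      rw [habsS θ] at h2; linarith
    intro h
    rw [hPdef] at h
    simp only [eval_sub, eval_pow, eval_X] at h
    rw [h] at h3
    simp at h3
  -- h function
  set h : ℝ → ℂ := fun θ => eval (z θ) P / (z θ) ^ S with hhdef
  have hmem : ∀ θ, h θ ∈ Complex.slitPlane := by
    intro θ
    have hsub : h θ - 1 = -(eval (z θ) A) / (z θ) ^ S := by
      rw [hhdef]
      field_simp [hzS θ]
      simp [hPdef]
    have habs1 : ‖h θ - 1‖ < 1 := by
      rw [hsub]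
      rw [norm_div, norm_neg, habsS θ]
      rw [div_lt_one (by positivity)]
      exact hA _ (habs θ)
    rw [Complex.mem_slitPlane_iff]
    left
    have hre : -‖h θ - 1‖ ≤ (h θ - 1).re := by
      have := Complex.abs_re_le_norm (h θ - 1)
      rw [abs_le] at this
      exact this.1
    have : (h θ).re = (h θ - 1).re + 1 := by simp [Complex.sub_re]
    rw [this]; linarith
  have hne : ∀ θ, h θ ≠ 0 := fun θ => Complex.slitPlane_ne_zero (hmem θ)
  -- derivative computations
  have hzD : ∀ θ, HasDerivAt z (z θ * I) θ := by
    intro θ; simpa [hzdef] using hasDerivAt_circleMap 0 R θ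
  have hgD : ∀ θ, HasDerivAt (fun θ => eval (z θ) P)
      (eval (z θ) (derivative P) * (z θ * I)) θ := by
    intro θ
    exact (P.hasDerivAt (z θ)).comp θ (hzD θ)
  have hdD : ∀ θ, HasDerivAt (fun θ => (z θ) ^ S)
      ((S * (z θ) ^ (S - 1)) * (z θ * I)) θ := by
    intro θ
    exact (hasDerivAt_pow S (z θ)).comp θ (hzD θ)
  have hhD : ∀ θ, HasDerivAt h
      ((eval (z θ) (derivative P) * (z θ * I) * (z θ) ^ S
        - eval (z θ) P * ((S * (z θ) ^ (S - 1)) * (z θ * I))) / ((z θ) ^ S) ^ 2) θ := by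
    intro θ
    exact (hgD θ).div (hdD θ) (hzS θ)
  -- the integrand
  set u : ℝ → ℂ := fun θ => (z θ * I) * (eval (z θ) (derivative P) / eval (z θ) P) with hudef
  have hkey : ∀ θ, HasDerivAt (fun θ => Complex.log (h θ)) (u θ - S * I) θ := by
    intro θ
    have hlog := (Complex.hasDerivAt_log (hmem θ)).comp θ (hhD θ)
    refine hlog.congr_deriv (Eq.symm ?_)
    rw [hudef, hhdef]
    have e1 : (z θ) ^ S = (z θ) ^ (S - 1) * (z θ) ∨ S = 0 := by
      rcases Nat.eq_zero_or_pos S with h0 | h0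
      · right; exact h0
      · left; rw [← pow_succ, Nat.sub_add_cancel h0]
    rcases e1 with e1 | e1
    · field_simp [hPz θ, hzS θ, hz0 θ]
      rw [e1]
      ring
    · subst e1
      field_simp [hPz θ, hz0 θ]
      ring
  have hucont : Continuous u := by
    have hzc : Continuous z := continuous_circleMap 0 R
    have h1 : Continuous fun θ => eval (z θ) (derivative P) := (Polynomial.continuous _).comp hzc
    have h2 : Continuous fun θ => eval (z θ) P := (Polynomial.continuous _).comp hzc
    exact ((hzc.mul continuous_const)).mul (h1.div h2 hPz)
  have hint : ∫ θ in (0:ℝ)..2 * π, (u θ - S * I) = 0 := by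
    rw [intervalIntegral.integral_eq_sub_of_hasDerivAt
      (f := fun θ => Complex.log (h θ)) (fun θ _ => hkey θ)
      ((hucont.sub continuous_const).intervalIntegrable _ _)]
    have : z (2 * π) = z 0 := by
      simpa using periodic_circleMap 0 R 0
    rw [hhdef]
    simp only [this]
    ring
  have hint2 : ∫ θ in (0:ℝ)..2 * π, u θ = 2 * π * I * S := by
    have hsplit : ∫ θ in (0:ℝ)..2 * π, u θ
        = (∫ θ in (0:ℝ)..2 * π, (u θ - S * I)) + ∫ θ in (0:ℝ)..2 * π, (S * I : ℂ) := by
      rw [← intervalIntegral.integral_add (f := fun θ => u θ - S * I) (g := fun _ => (S * I : ℂ))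
        ((hucont.sub continuous_const).intervalIntegrable _ _)
        (intervalIntegrable_const)]
      simp
    rw [hsplit, hint, zero_add, intervalIntegral.integral_const]
    simp [Complex.real_smul]
    ring
  rw [← hint2]
  rw [circleIntegral]
  apply intervalIntegral.integral_congr
  intro θ _
  simp only [hudef, deriv_circleMap, smul_eq_mul]
  rfl

lemma boundary_root (S M : ℕ) (a : ℕ → ℝ)
    (ha_nonneg : ∀ i ∈ Finset.range (M + 1), 0 ≤ a i)
    (ha_sum : ∑ i ∈ Finset.range (M + 1), a i = 1)
    (h_aper : ((Finset.range (M + 1)).filter (fun i => 0 < a i)).gcd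
        (fun i => ((S : ℤ) - (i : ℤ)).natAbs) = 1)
    (z : ℂ) (h1 : ‖z‖ = 1)
    (h0 : Polynomial.eval z
        (X ^ S - ∑ i ∈ Finset.range (M + 1), C ((a i : ℂ)) * X ^ i : Polynomial ℂ) = 0) :
    z = 1 := by
  have hz0 : z ≠ 0 := by
    intro h; rw [h] at h1; simp at h1
  have heval : z ^ S = ∑ i ∈ Finset.range (M + 1), (a i : ℂ) * z ^ i := by
    simp only [eval_sub, eval_pow, eval_X, eval_finset_sum, eval_mul, eval_C] at h0
    exact sub_eq_zero.mp h0
  -- multiply by conj (z^S)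
  have habsS : ‖z ^ S‖ = 1 := by rw [norm_pow, h1, one_pow]
  set w : ℕ → ℂ := fun i => z ^ i * (starRingEnd ℂ) (z ^ S) with hwdef
  have hmain : (1 : ℂ) = ∑ i ∈ Finset.range (M + 1), (a i : ℂ) * w i := by
    have := congrArg (fun t => t * (starRingEnd ℂ) (z ^ S)) heval
    simp only [Finset.sum_mul] at this
    have hl : z ^ S * (starRingEnd ℂ) (z ^ S) = 1 := by
      rw [Complex.mul_conj]
      norm_cast
      rw [← Complex.sq_norm, habsS]  -- normSq = abs^2
      norm_num
    rw [hl] at this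
    rw [this]
    apply Finset.sum_congr rfl
    intro i _
    ring
  have habsw : ∀ i, ‖w i‖ = 1 := by
    intro i
    simp only [hwdef, norm_mul, norm_pow, Complex.norm_conj, h1]
    norm_num
  -- real parts
  have hre : (1 : ℝ) = ∑ i ∈ Finset.range (M + 1), a i * (w i).re := by
    have := congrArg Complex.re hmain
    simpa [Complex.re_sum, Complex.mul_re] using this
  have hterm : ∀ i ∈ Finset.range (M + 1), 0 < a i → w i = 1 := by
    intro i hi hai
    have hre1 : (w i).re = 1 := by
      by_contra hne
      have hle : ∀ j ∈ Finset.range (M + 1), a j * (w j).re ≤ a j := by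
        intro j hj
        have : (w j).re ≤ 1 := by
          have := Complex.re_le_norm (w j); rw [habsw j] at this; exact this
        nlinarith [ha_nonneg j hj]
      have hlt : a i * (w i).re < a i := by
        have hwle : (w i).re ≤ 1 := by
          have := Complex.re_le_norm (w i); rw [habsw i] at this; exact this
        have : (w i).re < 1 := lt_of_le_of_ne hwle hne
        nlinarith
      have hsumlt : ∑ j ∈ Finset.range (M + 1), a j * (w j).re
          < ∑ j ∈ Finset.range (M + 1), a j :=
        Finset.sum_lt_sum hle ⟨i, hi, hlt⟩
      rw [ha_sum] at hsumlt
      linarith [hre]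
    -- |w|=1 and re = 1 → w = 1
    have hn : Complex.normSq (w i) = 1 := by
      rw [← Complex.sq_norm, habsw i]; norm_num
    have hsq : (w i).re ^ 2 + (w i).im ^ 2 = 1 := by
      rw [Complex.normSq_apply] at hn
      nlinarith [hn]
    apply Complex.ext
    · simpa using hre1
    · have : (w i).im ^ 2 = 0 := by rw [hre1] at hsq; linarith
      simpa using pow_eq_zero_iff (n := 2) (by norm_num) |>.mp this
  -- from w i = 1 conclude z ^ natAbs (S - i) = 1
  set u : ℂˣ := Units.mk0 z hz0 with hudef
  have hpow : ∀ i ∈ (Finset.range (M + 1)).filter (fun i => 0 < a i),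
      u ^ (((S : ℤ) - (i : ℤ)).natAbs) = 1 := by
    intro i hi
    rw [Finset.mem_filter] at hi
    have hwi := hterm i hi.1 hi.2
    have hconj : (starRingEnd ℂ) (z ^ S) = (z ^ S)⁻¹ := by
      rw [Complex.inv_def]
      have : Complex.normSq (z ^ S) = 1 := by
        rw [← Complex.sq_norm, habsS]; norm_num
      rw [this]
      simp
    rw [hwdef] at hwi
    simp only [hconj] at hwi
    have hzi : z ^ i = z ^ S := by
      field_simp at hwi
      exact hwi
    have hui : u ^ i = u ^ S := by
      apply Units.ext
      simpa [Units.val_pow_eq_pow_val, hudef] using hzi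
    have huz : u ^ ((S : ℤ) - (i : ℤ)) = 1 := by
      rw [zpow_sub, zpow_natCast, zpow_natCast, hui]
      simp
    rcases Int.natAbs_eq ((S : ℤ) - (i : ℤ)) with he | he
    · have : u ^ ((((S : ℤ) - i).natAbs : ℤ)) = 1 := by rw [← he]; exact huz
      rw [zpow_natCast] at this; exact this
    · have : u ^ (-((((S : ℤ) - i).natAbs : ℤ))) = 1 := by rw [← he]; exact huz
      rw [zpow_neg, inv_eq_one, zpow_natCast] at this; exact this
  have hdvd : orderOf u ∣ ((Finset.range (M + 1)).filter (fun i => 0 < a i)).gcd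
      (fun i => ((S : ℤ) - (i : ℤ)).natAbs) := by
    apply Finset.dvd_gcd
    intro i hi
    exact orderOf_dvd_of_pow_eq_one (hpow i hi)
  rw [h_aper, Nat.dvd_one] at hdvd
  have : u = 1 := orderOf_eq_one_iff.mp hdvd
  have : (u : ℂ) = 1 := by rw [this]; simp
  simpa [hudef] using this


lemma exists_rho (S M : ℕ) (a : ℕ → ℝ)
    (ha_sum : ∑ i ∈ Finset.range (M + 1), a i = 1)
    (ha_mean : ∑ i ∈ Finset.range (M + 1), (i : ℝ) * a i < S)
    (T : Finset ℝ) (hT : ∀ x ∈ T, 1 < x) :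
    ∃ ρ : ℝ, 1 < ρ ∧ (∀ x ∈ T, ρ < x) ∧
      ∑ i ∈ Finset.range (M + 1), a i * ρ ^ i < ρ ^ S := by
  set f : ℝ → ℝ := fun x => x ^ S - ∑ i ∈ Finset.range (M + 1), a i * x ^ i with hfdef
  have hf1 : f 1 = 0 := by
    simp only [hfdef, one_pow, mul_one, ha_sum]
    ring
  set D : ℝ := S - ∑ i ∈ Finset.range (M + 1), (i : ℝ) * a i with hDdef
  have hD : 0 < D := by rw [hDdef]; linarith
  have hderiv : HasDerivAt f D 1 := by
    have h1 : HasDerivAt (fun x : ℝ => x ^ S) ((S : ℝ) * 1 ^ (S - 1)) 1 := hasDerivAt_pow S 1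
    have h2 : HasDerivAt (fun x : ℝ => ∑ i ∈ Finset.range (M + 1), a i * x ^ i)
        (∑ i ∈ Finset.range (M + 1), a i * ((i : ℝ) * 1 ^ (i - 1))) 1 := by
      apply HasDerivAt.fun_sum
      intro i _
      exact (hasDerivAt_pow i 1).const_mul (a i)
    have := h1.sub h2
    refine this.congr_deriv (Eq.symm ?_)
    simp only [one_pow, mul_one, hDdef]
    congr 1
    apply Finset.sum_congr rfl
    intro i _
    ring
  have hs : Tendsto (slope f 1) (𝓝[>] 1) (𝓝 D) :=
    (hasDerivAt_iff_tendsto_slope.mp hderiv).mono_left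
      (nhdsWithin_mono _ (fun x hx => ne_of_gt hx))
  have hpos : ∀ᶠ x in 𝓝[>] (1:ℝ), 0 < slope f 1 x := hs.eventually (lt_mem_nhds hD)
  have hgt1 : ∀ᶠ x in 𝓝[>] (1:ℝ), 1 < x := eventually_mem_nhdsWithin
  have hlt : ∀ᶠ x in 𝓝[>] (1:ℝ), ∀ r ∈ T, x < r := by
    rw [eventually_all_finset]
    intro r hr
    exact eventually_nhdsWithin_of_eventually_nhds (eventually_lt_nhds (hT r hr))
  obtain ⟨x, hx1, hx2, hx3⟩ := (hpos.and (hgt1.and hlt)).exists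
  refine ⟨x, hx2, hx3, ?_⟩
  have hslope : slope f 1 x = (f x - f 1) / (x - 1) := slope_def_field f 1 x
  have hfx : 0 < f x := by
    rw [hslope, hf1, sub_zero] at hx1
    have hx1' : 0 < x - 1 := by linarith [hx2]
    have := (div_pos_iff).mp hx1
    rcases this with ⟨h, _⟩ | ⟨_, h⟩
    · exact h
    · linarith
  rw [hfdef] at hfx
  simp only at hfx
  linarith

end
end AuxRootsLemma

/-- Under the stability condition and the aperiodicity condition
(gcd of |S − i| over indices with a_i > 0 equals 1), the only root of
P(z) = z^S − Σ a_i z^i on the unit circle is z = 1, and P has exactly S − 1 roots,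
with multiplicity, strictly inside the unit disc. -/
theorem roots_in_open_unit_disc
    (S M : ℕ) (hS : 1 ≤ S) (a : ℕ → ℝ)
    (ha_nonneg : ∀ i ∈ Finset.range (M + 1), 0 ≤ a i)
    (ha_sum : ∑ i ∈ Finset.range (M + 1), a i = 1)
    (ha_mean : ∑ i ∈ Finset.range (M + 1), (i : ℝ) * a i < S)
    (h_aper :
      ((Finset.range (M + 1)).filter (fun i => 0 < a i)).gcd
        (fun i => ((S : ℤ) - (i : ℤ)).natAbs) = 1) :
    (∀ z : ℂ, ‖z‖ = 1 →
        Polynomial.eval z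
          (X ^ S - ∑ i ∈ Finset.range (M + 1), C ((a i : ℂ)) * X ^ i : Polynomial ℂ) = 0 →
        z = 1) ∧
    Multiset.card
      (((X ^ S - ∑ i ∈ Finset.range (M + 1), C ((a i : ℂ)) * X ^ i : Polynomial ℂ).roots).filter
        (fun z => ‖z‖ < 1)) = S - 1 := by
  have hcircle : ∀ z : ℂ, ‖z‖ = 1 →
      Polynomial.eval z
        (X ^ S - ∑ i ∈ Finset.range (M + 1), C ((a i : ℂ)) * X ^ i : Polynomial ℂ) = 0 →
      z = 1 := fun z h1 h0 => boundary_root S M a ha_nonneg ha_sum h_aper z h1 h0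
  refine ⟨hcircle, ?_⟩
  set Ap : Polynomial ℂ := ∑ i ∈ Finset.range (M + 1), C ((a i : ℂ)) * X ^ i with hApdef
  set P : Polynomial ℂ := X ^ S - Ap with hPdef
  -- bound on |Ap|
  have habsA : ∀ z : ℂ, ‖eval z Ap‖
      ≤ ∑ i ∈ Finset.range (M + 1), a i * ‖z‖ ^ i := by
    intro z
    rw [hApdef]
    simp only [eval_finset_sum, eval_mul, eval_C, eval_pow, eval_X]
    refine le_trans (norm_sum_le _ _) (le_of_eq ?_)
    apply Finset.sum_congr rfl
    intro i hi
    rw [norm_mul, norm_pow]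
    rw [Complex.norm_of_nonneg (ha_nonneg i hi)]
  -- choose the radius
  set T : Finset ℝ := (Multiset.map (‖·‖) P.roots).toFinset.filter (fun x => 1 < x)
    with hTdef
  have hT : ∀ x ∈ T, 1 < x := by
    intro x hx
    rw [hTdef, Finset.mem_filter] at hx
    exact hx.2
  obtain ⟨ρ, hρ1, hρT, hρA⟩ := exists_rho S M a ha_sum ha_mean T hT
  have hρpos : (0:ℝ) < ρ := lt_trans one_pos hρ1
  have hA' : ∀ z : ℂ, ‖z‖ = ρ → ‖eval z Ap‖ < ρ ^ S := by
    intro z hz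
    have := habsA z
    rw [hz] at this
    exact lt_of_le_of_lt this hρA
  have hPne : ∀ z : ℂ, ‖z‖ = ρ → eval z P ≠ 0 := by
    intro z hz h
    have h1 : ‖eval z Ap‖ < ρ ^ S := hA' z hz
    have h2 : eval z P = z ^ S - eval z Ap := by simp [hPdef]
    rw [h2, sub_eq_zero] at h
    have h3 : ‖z ^ S‖ = ρ ^ S := by rw [norm_pow, hz]
    rw [← h, h3] at h1
    exact lt_irrefl _ h1
  have hP0 : P ≠ 0 := by
    intro h
    refine hPne (ρ : ℂ) ?_ (by rw [h]; simp)
    simp [abs_of_pos hρpos]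
  have hroots_ne : ∀ r ∈ P.roots, ‖r‖ ≠ ρ := by
    intro r hr h
    exact hPne r h ((mem_roots hP0).mp hr)
  -- argument principle count
  have hlc : P.leadingCoeff ≠ 0 := leadingCoeff_ne_zero.mpr hP0
  have hsplits : P = C P.leadingCoeff * (P.roots.map fun r => X - C r).prod :=
    (IsAlgClosed.splits P).eq_prod_roots
  have hcount := argPrinciple P.leadingCoeff hlc P.roots hρpos hroots_ne
  rw [← hsplits] at hcount
  have hval := integral_logDeriv S Ap hρpos hA'
  rw [← hPdef] at hval
  have h2πI : (2 * (Real.pi:ℂ) * Complex.I) ≠ 0 := by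
    simp [Real.pi_ne_zero, Complex.I_ne_zero, Complex.ofReal_ne_zero]
  have hcardC : (((P.roots.filter fun r => ‖r‖ < ρ).card : ℕ) : ℂ) = (S : ℂ) :=
    mul_left_cancel₀ h2πI (by rw [← hcount, ← hval])
  have hcardρ : (P.roots.filter fun r => ‖r‖ < ρ).card = S := by
    exact_mod_cast hcardC
  -- filter < ρ equals filter ≤ 1
  have hfe : (P.roots.filter fun r => ‖r‖ < ρ)
      = (P.roots.filter fun r => ‖r‖ ≤ 1) := by
    apply Multiset.filter_congr
    intro r hr
    constructor
    · intro h
      by_contra hle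
      push_neg at hle
      have hrT : ‖r‖ ∈ T := by
        rw [hTdef, Finset.mem_filter]
        exact ⟨by rw [Multiset.mem_toFinset]; exact Multiset.mem_map_of_mem _ hr, hle⟩
      exact absurd h (not_lt.2 (le_of_lt (hρT _ hrT)))
    · intro h
      exact lt_of_le_of_lt h hρ1
  -- split ≤ 1 into < 1 and = 1
  have hsum2 : (P.roots.filter fun r => ‖r‖ < 1).card
      + (P.roots.filter fun r => ‖r‖ = 1).card
      = (P.roots.filter fun r => ‖r‖ ≤ 1).card := by
    have h1 := Multiset.filter_add_filter (fun r => ‖r‖ < 1)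
      (fun r => ‖r‖ = 1) P.roots
    have h2 : (P.roots.filter fun r => ‖r‖ < 1 ∨ ‖r‖ = 1)
        = (P.roots.filter fun r => ‖r‖ ≤ 1) := by
      apply Multiset.filter_congr
      intro r _
      exact ⟨fun h => h.elim le_of_lt le_of_eq, fun h => lt_or_eq_of_le h⟩
    have h3 : (P.roots.filter fun r => ‖r‖ < 1 ∧ ‖r‖ = 1) = 0 := by
      rw [Multiset.filter_eq_nil]
      rintro r _ ⟨h4, h5⟩
      rw [h5] at h4
      exact lt_irrefl _ h4
    have := congrArg Multiset.card h1
    rw [Multiset.card_add, Multiset.card_add, h3] at this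
    rw [this, h2]
    simp
  -- the boundary part has multiplicity 1
  have hone : (P.roots.filter fun r => ‖r‖ = 1).card = 1 := by
    have heq : (P.roots.filter fun r => ‖r‖ = 1)
        = (P.roots.filter fun r => (1:ℂ) = r) := by
      apply Multiset.filter_congr
      intro r hr
      constructor
      · intro h
        exact (hcircle r h ((mem_roots hP0).mp hr)).symm
      · intro h
        rw [← h]
        simp
    rw [heq, ← Multiset.count_eq_card_filter_eq, count_roots]
    -- rootMultiplicity 1 P = 1
    have hr1 : P.IsRoot 1 := by
      rw [hPdef]
      simp only [IsRoot, eval_sub, eval_pow, eval_X, one_pow, hApdef, eval_finset_sum,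
        eval_mul, eval_C, mul_one]
      have : ∑ i ∈ Finset.range (M + 1), ((a i : ℂ)) = 1 := by
        rw [← Complex.ofReal_sum]
        rw [ha_sum]
        simp
      rw [this]
      ring
    have hd1 : eval 1 (derivative P)
        = ((S : ℝ) - ∑ i ∈ Finset.range (M + 1), a i * i : ℝ) := by
      rw [hPdef, hApdef, derivative_sub, derivative_X_pow, derivative_sum]
      simp only [eval_sub, eval_finset_sum]
      have hterm : ∀ i ∈ Finset.range (M + 1),
          eval 1 (derivative (C ((a i : ℂ)) * X ^ i)) = (a i : ℂ) * i := by
        intro i _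
        rw [derivative_C_mul, derivative_X_pow]
        simp
      rw [Finset.sum_congr rfl hterm]
      push_cast
      simp
    have hdne : ¬ (derivative P).IsRoot 1 := by
      rw [IsRoot, hd1]
      intro h
      rw [Complex.ofReal_eq_zero] at h
      have h5 : ∑ i ∈ Finset.range (M + 1), a i * i = ∑ i ∈ Finset.range (M + 1), (i:ℝ) * a i :=
        Finset.sum_congr rfl fun i _ => mul_comm _ _
      rw [h5] at h
      linarith
    have hge : 0 < P.rootMultiplicity 1 := (rootMultiplicity_pos hP0).mpr hr1
    have hlt : ¬ 1 < P.rootMultiplicity 1 := by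
      rw [one_lt_rootMultiplicity_iff_isRoot hP0]
      rintro ⟨_, h⟩
      exact hdne h
    omega
  rw [hfe, ← hsum2, hone] at hcardρ
  omega
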